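/- Let X₁,…,X_n be i.i.d. real random variables with E[X] = 0 and E[|X|^ρ] < ∞ for some ρ ∈ [1,2]. Then P( | (1/n) Σ_{i=1}^n X_i | ≥ n^{(2−ρ)/ρ} ) ≤ 2 E[|X|^ρ] / n. -/

import Mathlib

open MeasureTheory Matrix Filter ProbabilityTheory
open scoped BigOperators ENNReal NNReal Topology

noncomputable section

/-- The Euclidean norm `‖v‖₂` of a vector `v ∈ ℝ^k`. -/
def enorm2 {k : ℕ} (v : Fin k → ℝ) : ℝ := Real.sqrt (∑ i, v i ^ 2)

/-- The operator norm `‖A‖₂` of a matrix with respect to Euclidean norms. -/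
def opNorm2 {a b : ℕ} (A : Matrix (Fin a) (Fin b) ℝ) : ℝ :=
  sSup {r : ℝ | ∃ v : Fin b → ℝ, enorm2 v = 1 ∧ r = enorm2 (A.mulVec v)}

/-- The smallest eigenvalue `σ_min(A)` of a symmetric matrix, realized as the minimum of the
quadratic form over the unit sphere. -/
def sigmaMin {k : ℕ} (A : Matrix (Fin k) (Fin k) ℝ) : ℝ :=
  sInf {r : ℝ | ∃ v : Fin k → ℝ, enorm2 v = 1 ∧ r = v ⬝ᵥ A.mulVec v}

/-- The squared Mahalanobis norm `‖v‖_Σ² = vᵀ Σ⁻¹ v`. -/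
def mahal {m : ℕ} (S : Matrix (Fin m) (Fin m) ℝ) (v : Fin m → ℝ) : ℝ :=
  v ⬝ᵥ (S⁻¹).mulVec v

/-- The Jacobian matrix `Dh(x) ∈ ℝ^{d×m}` of `h : ℝ^m → ℝ^d` at `x`. -/
def jac {m d : ℕ} (h : (Fin m → ℝ) → (Fin d → ℝ)) (x : Fin m → ℝ) : Matrix (Fin d) (Fin m) ℝ :=
  Matrix.of fun β γ => fderiv ℝ h x (Pi.single γ 1) β

/-- The Hessian matrix `D²h^β(x) ∈ ℝ^{m×m}` of the `β`-th component of `h` at `x`. -/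
def hess {m d : ℕ} (h : (Fin m → ℝ) → (Fin d → ℝ)) (β : Fin d) (x : Fin m → ℝ) :
    Matrix (Fin m) (Fin m) ℝ :=
  Matrix.of fun i j =>
    fderiv ℝ (fun y => fderiv ℝ (fun z => h z β) y (Pi.single j 1)) x (Pi.single i 1)

/-- Assumption (CH): `0` lies in the interior of the convex hull of the range of `h`. -/
def AssumptionCH {m d : ℕ} (h : (Fin m → ℝ) → Fin d → ℝ) : Prop :=
  (0 : Fin d → ℝ) ∈ interior (convexHull ℝ (Set.range h))

/-- Assumption (D1): `h ∈ C³` and the Jacobian is Lipschitz with modulus `κ₁`. -/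
def AssumptionD1 {m d : ℕ} (h : (Fin m → ℝ) → Fin d → ℝ) (κ₁ : (Fin m → ℝ) → ℝ) : Prop :=
  ContDiff ℝ 3 h ∧ (∀ x, 0 ≤ κ₁ x) ∧
    ∀ (x Δ : Fin m → ℝ) (ζ : Fin d → ℝ),
      enorm2 (fun γ => ∑ β, ζ β * (jac h (x + Δ) β γ - jac h x β γ)) ≤
        κ₁ x * enorm2 Δ * enorm2 ζ

/-- Assumption (D2): the Hessians are locally Lipschitz with modulus `κ₂` at scale `δ̂`. -/
def AssumptionD2 {m d : ℕ} (h : (Fin m → ℝ) → Fin d → ℝ) (κ₂ : (Fin m → ℝ) → ℝ)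
    (δhat : ℝ) : Prop :=
  0 < δhat ∧ (∀ x, 0 ≤ κ₂ x) ∧
    ∀ (x Δ : Fin m → ℝ) (ζ : Fin d → ℝ), enorm2 Δ ≤ δhat →
      opNorm2 (∑ β, ζ β • (hess h β (x + Δ) - hess h β x)) ≤ κ₂ x * enorm2 Δ * enorm2 ζ

/-- Optimal transport cost with ground cost `c(x̄,x) = ‖x̄ - x‖_Σ²`. -/
def otCost {m : ℕ} (S : Matrix (Fin m) (Fin m) ℝ) (Q P : Measure (Fin m → ℝ)) : ℝ≥0∞ :=
  ⨅ (π : Measure ((Fin m → ℝ) × (Fin m → ℝ))) (_ : IsProbabilityMeasure π)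
    (_ : π.map Prod.fst = Q) (_ : π.map Prod.snd = P),
    ∫⁻ p, ENNReal.ofReal (mahal S (p.1 - p.2)) ∂π

/-- The empirical measure of the sample `X₁, …, X_n`. -/
def empMeas {m n : ℕ} (X : Fin n → Fin m → ℝ) : Measure (Fin m → ℝ) :=
  (n : ℝ≥0∞)⁻¹ • ∑ i, Measure.dirac (X i)

/-- The Wasserstein projection value `R_n(h)`. -/
def Rn {m d n : ℕ} (S : Matrix (Fin m) (Fin m) ℝ) (h : (Fin m → ℝ) → Fin d → ℝ)
    (X : Fin n → Fin m → ℝ) : ℝ≥0∞ :=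
  ⨅ (P : Measure (Fin m → ℝ)) (_ : IsProbabilityMeasure P) (_ : Integrable h P)
    (_ : (∫ x, h x ∂P) = 0), otCost S (empMeas X) P

/-- The inner objective `ζᵀ ∫₀¹ Dh(Xᵢ + n^{-1/2}Δu)Δ du − ‖Δ‖_Σ²`. -/
def innerObj {m d : ℕ} (S : Matrix (Fin m) (Fin m) ℝ) (h : (Fin m → ℝ) → Fin d → ℝ)
    (n : ℕ) (Xi : Fin m → ℝ) (ζ : Fin d → ℝ) (Δ : Fin m → ℝ) : ℝ :=
  (∫ u in (0:ℝ)..1, ζ ⬝ᵥ (jac h (Xi + ((Real.sqrt n)⁻¹ * u) • Δ)).mulVec Δ) - mahal S Δ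

/-- The dual function `M_n(ζ)`, with values in `[0,∞]`. -/
def Mn {m d n : ℕ} (S : Matrix (Fin m) (Fin m) ℝ) (h : (Fin m → ℝ) → Fin d → ℝ)
    (X : Fin n → Fin m → ℝ) (ζ : Fin d → ℝ) : ℝ≥0∞ :=
  (n : ℝ≥0∞)⁻¹ * ∑ i, ⨆ Δ : Fin m → ℝ, ENNReal.ofReal (innerObj S h n (X i) ζ Δ)

/-- `H_n = n^{-1/2} ∑ᵢ h(Xᵢ)`. -/
def Hn {m d n : ℕ} (h : (Fin m → ℝ) → Fin d → ℝ) (X : Fin n → Fin m → ℝ) : Fin d → ℝ :=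
  (Real.sqrt n)⁻¹ • ∑ i, h (X i)

/-- `𝒱_n = n⁻¹ ∑ᵢ Dh(Xᵢ) Σ Dh(Xᵢ)ᵀ`. -/
def Vn {m d n : ℕ} (S : Matrix (Fin m) (Fin m) ℝ) (h : (Fin m → ℝ) → Fin d → ℝ)
    (X : Fin n → Fin m → ℝ) : Matrix (Fin d) (Fin d) ℝ :=
  (n : ℝ)⁻¹ • ∑ i, jac h (X i) * S * (jac h (X i))ᵀ

/-- `𝒲_n = n⁻¹ ∑ᵢ h(Xᵢ) h(Xᵢ)ᵀ`. -/
def Wn {m d n : ℕ} (h : (Fin m → ℝ) → Fin d → ℝ) (X : Fin n → Fin m → ℝ) :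
    Matrix (Fin d) (Fin d) ℝ :=
  (n : ℝ)⁻¹ • ∑ i, Matrix.vecMulVec (h (X i)) (h (X i))

/-- Entry of the tensor `Dh^β(x) Σ D²h^γ(x) Σ Dh^ω(x)ᵀ`. -/
def KnE {m d : ℕ} (S : Matrix (Fin m) (Fin m) ℝ) (h : (Fin m → ℝ) → Fin d → ℝ)
    (x : Fin m → ℝ) (β γ ω : Fin d) : ℝ :=
  jac h x β ⬝ᵥ S.mulVec ((hess h γ x).mulVec (S.mulVec (jac h x ω)))

/-- The tensor `𝒦_n`. -/
def Kn {m d n : ℕ} (S : Matrix (Fin m) (Fin m) ℝ) (h : (Fin m → ℝ) → Fin d → ℝ)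
    (X : Fin n → Fin m → ℝ) (β γ ω : Fin d) : ℝ :=
  (n : ℝ)⁻¹ * ∑ i, KnE S h (X i) β γ ω

/-- `ξ_n = 𝒱_n⁻¹ H_n`. -/
def xin {m d n : ℕ} (S : Matrix (Fin m) (Fin m) ℝ) (h : (Fin m → ℝ) → Fin d → ℝ)
    (X : Fin n → Fin m → ℝ) : Fin d → ℝ :=
  ((Vn S h X)⁻¹).mulVec (Hn h X)

/-- The quadratic term `⟨𝒱_n, ξ_n^{⊗2}⟩`. -/
def quadTerm {m d n : ℕ} (S : Matrix (Fin m) (Fin m) ℝ) (h : (Fin m → ℝ) → Fin d → ℝ)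
    (X : Fin n → Fin m → ℝ) : ℝ :=
  xin S h X ⬝ᵥ (Vn S h X).mulVec (xin S h X)

/-- The cubic term `⟨𝒦_n, ξ_n^{⊗3}⟩`. -/
def cubTerm {m d n : ℕ} (S : Matrix (Fin m) (Fin m) ℝ) (h : (Fin m → ℝ) → Fin d → ℝ)
    (X : Fin n → Fin m → ℝ) : ℝ :=
  ∑ β, ∑ γ, ∑ ω, Kn S h X β γ ω * xin S h X β * xin S h X γ * xin S h X ω

/-- The cubic form `L_n(ζ)`. -/
def Ln {m d n : ℕ} (S : Matrix (Fin m) (Fin m) ℝ) (h : (Fin m → ℝ) → Fin d → ℝ)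
    (X : Fin n → Fin m → ℝ) (ζ : Fin d → ℝ) : ℝ :=
  (1/8) * ∑ β, ∑ γ, ∑ ω, ζ β * ζ γ * ζ ω * Kn S h X β γ ω

/-- `F_n(ζ) = ¼ ζᵀ𝒱_nζ + n^{-1/2} L_n(ζ)`. -/
def Fn {m d n : ℕ} (S : Matrix (Fin m) (Fin m) ℝ) (h : (Fin m → ℝ) → Fin d → ℝ)
    (X : Fin n → Fin m → ℝ) (ζ : Fin d → ℝ) : ℝ :=
  (1/4) * (ζ ⬝ᵥ (Vn S h X).mulVec ζ) + (Real.sqrt n)⁻¹ * Ln S h X ζ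

/-- The gradient `∇L_n(ζ)`. -/
def gradLn {m d n : ℕ} (S : Matrix (Fin m) (Fin m) ℝ) (h : (Fin m → ℝ) → Fin d → ℝ)
    (X : Fin n → Fin m → ℝ) (ζ : Fin d → ℝ) : Fin d → ℝ :=
  fun β => fderiv ℝ (Ln S h X) ζ (Pi.single β 1)

/-- The population matrix `V = E[Dh(X) Σ Dh(X)ᵀ]`. -/
def VP {m d : ℕ} (S : Matrix (Fin m) (Fin m) ℝ) (h : (Fin m → ℝ) → Fin d → ℝ)
    (P : Measure (Fin m → ℝ)) : Matrix (Fin d) (Fin d) ℝ :=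
  Matrix.of fun β γ => ∫ x, (jac h x * S * (jac h x)ᵀ) β γ ∂P

/-- The population matrix `W = E[h(X) h(X)ᵀ]`. -/
def WP {m d : ℕ} (h : (Fin m → ℝ) → Fin d → ℝ) (P : Measure (Fin m → ℝ)) :
    Matrix (Fin d) (Fin d) ℝ :=
  Matrix.of fun β γ => ∫ x, h x β * h x γ ∂P

/-- `E[‖Dh(X)‖₂² κ₁(X)]`. -/
def momA {m d : ℕ} (h : (Fin m → ℝ) → Fin d → ℝ) (κ₁ : (Fin m → ℝ) → ℝ)
    (P : Measure (Fin m → ℝ)) : ℝ := ∫ x, opNorm2 (jac h x) ^ 2 * κ₁ x ∂P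

/-- `E[‖Dh(X)‖₂² κ₁(X)²]`. -/
def momB {m d : ℕ} (h : (Fin m → ℝ) → Fin d → ℝ) (κ₁ : (Fin m → ℝ) → ℝ)
    (P : Measure (Fin m → ℝ)) : ℝ := ∫ x, opNorm2 (jac h x) ^ 2 * κ₁ x ^ 2 ∂P

/-- `E[‖Dh(X)‖₂³ κ₂(X)]`. -/
def momC {m d : ℕ} (h : (Fin m → ℝ) → Fin d → ℝ) (κ₂ : (Fin m → ℝ) → ℝ)
    (P : Measure (Fin m → ℝ)) : ℝ := ∫ x, opNorm2 (jac h x) ^ 3 * κ₂ x ∂P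

/-- `E[‖Dh(X)‖₂³ κ₁(X) κ₂(X)]`. -/
def momD {m d : ℕ} (h : (Fin m → ℝ) → Fin d → ℝ) (κ₁ κ₂ : (Fin m → ℝ) → ℝ)
    (P : Measure (Fin m → ℝ)) : ℝ := ∫ x, opNorm2 (jac h x) ^ 3 * κ₁ x * κ₂ x ∂P

/-- `E[‖Dh(X)‖₂² κ₁(X)³]`. -/
def momE {m d : ℕ} (h : (Fin m → ℝ) → Fin d → ℝ) (κ₁ : (Fin m → ℝ) → ℝ)
    (P : Measure (Fin m → ℝ)) : ℝ := ∫ x, opNorm2 (jac h x) ^ 2 * κ₁ x ^ 3 ∂P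

/-- `E[‖Dh(X)‖₂³ κ₁(X)² κ₂(X)]`. -/
def momF {m d : ℕ} (h : (Fin m → ℝ) → Fin d → ℝ) (κ₁ κ₂ : (Fin m → ℝ) → ℝ)
    (P : Measure (Fin m → ℝ)) : ℝ := ∫ x, opNorm2 (jac h x) ^ 3 * κ₁ x ^ 2 * κ₂ x ∂P

/-- Condition A on the sample. -/
def CondA {m d n : ℕ} (S : Matrix (Fin m) (Fin m) ℝ) (h : (Fin m → ℝ) → Fin d → ℝ)
    (κ₁ κ₂ : (Fin m → ℝ) → ℝ) (P : Measure (Fin m → ℝ)) (X : Fin n → Fin m → ℝ) : Prop :=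
  (2⁻¹ * sigmaMin (VP S h P) ≤ sigmaMin (Vn S h X)) ∧
  (enorm2 (Hn h X) ≤ 2 * Real.sqrt (Real.log n)) ∧
  (∀ i, opNorm2 (jac h (X i)) ≤ (n : ℝ) ^ ((1 : ℝ)/4)) ∧
  (∀ i, κ₁ (X i) ≤ (n : ℝ) ^ ((1 : ℝ)/4)) ∧
  (|(n : ℝ)⁻¹ * ∑ i, opNorm2 (jac h (X i)) ^ 2 * κ₁ (X i)| ≤ 1 + momA h κ₁ P) ∧
  (|(n : ℝ)⁻¹ * ∑ i, opNorm2 (jac h (X i)) ^ 2 * κ₁ (X i) ^ 2| ≤ 1 + momB h κ₁ P) ∧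
  (|(n : ℝ)⁻¹ * ∑ i, opNorm2 (jac h (X i)) ^ 3 * κ₂ (X i)| ≤ 1 + momC h κ₂ P) ∧
  (|(n : ℝ)⁻¹ * ∑ i, opNorm2 (jac h (X i)) ^ 3 * κ₁ (X i) * κ₂ (X i)|
      ≤ Real.sqrt n + momD h κ₁ κ₂ P) ∧
  (|(n : ℝ)⁻¹ * ∑ i, opNorm2 (jac h (X i)) ^ 2 * κ₁ (X i) ^ 3| ≤ Real.sqrt n + momE h κ₁ P) ∧
  (|(n : ℝ)⁻¹ * ∑ i, opNorm2 (jac h (X i)) ^ 3 * κ₁ (X i) ^ 2 * κ₂ (X i)|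
      ≤ (n : ℝ) + momF h κ₁ κ₂ P)

open Classical in
/-- The principal square root of a positive semidefinite matrix (junk value `0` otherwise). -/
def matSqrt {k : ℕ} (A : Matrix (Fin k) (Fin k) ℝ) : Matrix (Fin k) (Fin k) ℝ :=
  if hA : A.PosSemidef then
    (hA.1.eigenvectorUnitary : Matrix (Fin k) (Fin k) ℝ) * diagonal (RCLike.ofReal ∘ Real.sqrt ∘ hA.1.eigenvalues) *
      (star hA.1.eigenvectorUnitary : Matrix (Fin k) (Fin k) ℝ) else 0

/-- The standard Gaussian density on `ℝ^d`. -/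
def gaussDensity (d : ℕ) (v : Fin d → ℝ) : ℝ :=
  (2 * Real.pi) ^ (-(d : ℝ)/2) * Real.exp (-(∑ i, v i ^ 2)/2)

/-- `F_{W,V}(z) = ∫_{vᵀW^{1/2}V⁻¹W^{1/2}v ≤ z} φ(v) dv`. -/
def FWV {d : ℕ} (W V : Matrix (Fin d) (Fin d) ℝ) (z : ℝ) : ℝ :=
  ∫ v in {v : Fin d → ℝ | v ⬝ᵥ (matSqrt W * V⁻¹ * matSqrt W).mulVec v ≤ z}, gaussDensity d v

/-- The `(1-α)`-quantile `z_{W,V} = F_{W,V}⁻¹(1-α)`. -/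
def zQuantile {d : ℕ} (α : ℝ) (W V : Matrix (Fin d) (Fin d) ℝ) : ℝ :=
  sInf {z : ℝ | 0 < z ∧ 1 - α ≤ FWV W V z}

/-- The Frobenius inner product of two square matrices. -/
def frob {k : ℕ} (A B : Matrix (Fin k) (Fin k) ℝ) : ℝ := ∑ i, ∑ j, A i j * B i j

/-- The matrix exponential (defined entrywise by the exponential series). -/
def matExp {k : ℕ} (A : Matrix (Fin k) (Fin k) ℝ) : Matrix (Fin k) (Fin k) ℝ :=
  Matrix.of fun i j => ∑' t : ℕ, (t.factorial : ℝ)⁻¹ * (A ^ t) i j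

/-- The matrix `L_{W,V}`. -/
def LWV {d : ℕ} (α : ℝ) (W V : Matrix (Fin d) (Fin d) ℝ) : Matrix (Fin d) (Fin d) ℝ :=
  Matrix.of fun j k =>
    ∫ v in {v : Fin d → ℝ | ∑ i, v i ^ 2 ≤ zQuantile α W V},
      (2 * Real.pi) ^ (-(d : ℝ)/2) *
        Real.exp (-(v ⬝ᵥ (matSqrt V * W⁻¹ * matSqrt V).mulVec v)/2) *
        Real.sqrt (matSqrt V * W⁻¹ * matSqrt V).det *
        (-(1/2) * (v j * v k) + (1/2) * ((matSqrt V)⁻¹ * W * (matSqrt V)⁻¹) j k)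

/-- The differential `d(V^{1/2} W⁻¹ V^{1/2})` in the directions `(dW, dV)`. -/
def PhiDiff {d : ℕ} (W V dW dV : Matrix (Fin d) (Fin d) ℝ) : Matrix (Fin d) (Fin d) ℝ :=
  (Matrix.of fun i j => ∫ s in Set.Ioi (0:ℝ),
      (matExp (-(s • matSqrt V)) * dV * matExp (-(s • matSqrt V))) i j) * W⁻¹ * matSqrt V
  - matSqrt V * W⁻¹ * dW * W⁻¹ * matSqrt V
  + matSqrt V * W⁻¹ *
    (Matrix.of fun i j => ∫ s in Set.Ioi (0:ℝ),
      (matExp (-(s • matSqrt V)) * dV * matExp (-(s • matSqrt V))) i j)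

/-- The linear functional `𝓛_{W,V}(dW, dV)`. -/
def calL {d : ℕ} (α : ℝ) (W V dW dV : Matrix (Fin d) (Fin d) ℝ) : ℝ :=
  frob (LWV α W V) (PhiDiff W V dW dV) / frob (LWV α W V) (matSqrt V * W⁻¹ * matSqrt V)

/-- The total variation distance between two measures. -/
def tvDist {α : Type*} [MeasurableSpace α] (P Q : Measure α) : ℝ :=
  sSup {r : ℝ | ∃ s : Set α, MeasurableSet s ∧ r = |(P s).toReal - (Q s).toReal|}

/-- `sup_{‖t‖₂ ≥ b} |∫ exp(i tᵀ y) dP(y)|`. -/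
def charAbsSup {d : ℕ} (P : Measure (Fin d → ℝ)) (b : ℝ) : ℝ :=
  sSup {r : ℝ | ∃ t : Fin d → ℝ, b ≤ enorm2 t ∧
    r = ‖∫ y, Complex.exp (Complex.I * ((t ⬝ᵥ y : ℝ) : ℂ)) ∂P‖}

/-- Cramér's condition for a measure on `ℝ^d`. -/
def CramerCond {d : ℕ} (P : Measure (Fin d → ℝ)) : Prop :=
  ∀ b : ℝ, 0 < b → charAbsSup P b < 1

/-- Entrywise mean `E[A]` of a matrix-valued law. -/
def matMean {k : ℕ} (ν : Measure (Fin k → Fin k → ℝ)) : Matrix (Fin k) (Fin k) ℝ :=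
  Matrix.of fun i j => ∫ x, x i j ∂ν

/-- Entrywise mean `E[(A - E[A])²]` of a matrix-valued law. -/
def matVar {k : ℕ} (ν : Measure (Fin k → Fin k → ℝ)) : Matrix (Fin k) (Fin k) ℝ :=
  Matrix.of fun i j => ∫ x, ((Matrix.of x - matMean ν) * (Matrix.of x - matMean ν)) i j ∂ν

section Statement18Aux

variable {ρ : ℝ}

private lemma rpow_subadd (p : ℝ) (hp : 0 ≤ p) (hp1 : p ≤ 1) {x y : ℝ} (hx : 0 ≤ x) (hy : 0 ≤ y) :
    (x + y) ^ p ≤ x ^ p + y ^ p := by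
  have h := NNReal.rpow_add_le_add_rpow x.toNNReal y.toNNReal hp hp1
  rw [← NNReal.coe_le_coe] at h
  push_cast at h
  rwa [Real.coe_toNNReal x hx, Real.coe_toNNReal y hy] at h

private lemma lemB (hρ1 : 1 ≤ ρ) (hρ2 : ρ ≤ 2) {x : ℝ} (hx : 0 ≤ x) :
    (1 + x) ^ ρ ≤ 1 + ρ * x + x ^ ρ := by
  have hρ0 : (0:ℝ) < ρ := lt_of_lt_of_le one_pos hρ1
  set f : ℝ → ℝ := fun x => 1 + ρ * x + x ^ ρ - (1 + x) ^ ρ with hf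
  have hderiv : ∀ y ∈ interior (Set.Ici (0:ℝ)),
      HasDerivAt f (ρ + ρ * y ^ (ρ-1) - ρ * (1+y) ^ (ρ-1)) y := by
    intro y hy
    rw [interior_Ici] at hy
    have hy0 : (0:ℝ) < y := hy
    have h1 : HasDerivAt (fun x : ℝ => x ^ ρ) (ρ * y ^ (ρ - 1)) y :=
      Real.hasDerivAt_rpow_const (Or.inl hy0.ne')
    have h2 : HasDerivAt (fun x : ℝ => (1 + x) ^ ρ) (ρ * (1 + y) ^ (ρ - 1)) y := by
      have := (Real.hasDerivAt_rpow_const (x := 1 + y) (p := ρ)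
        (Or.inl (by positivity))).comp y ((hasDerivAt_id y).const_add 1)
      simpa [Function.comp_def] using this
    have h3 : HasDerivAt (fun x : ℝ => 1 + ρ * x) ρ y := by
      simpa using ((hasDerivAt_id y).const_mul ρ).const_add 1
    exact (h3.add h1).sub h2
  have cont : ContinuousOn f (Set.Ici 0) := by
    have c1 : Continuous fun x : ℝ => x ^ ρ := Real.continuous_rpow_const hρ0.le
    exact (((continuous_const.add (continuous_const.mul continuous_id)).add c1).sub
      (c1.comp (continuous_const.add continuous_id))).continuousOn
  have mono : MonotoneOn f (Set.Ici 0) := by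
    refine monotoneOn_of_deriv_nonneg (convex_Ici 0) cont
      (fun y hy => (hderiv y hy).differentiableAt.differentiableWithinAt) ?_
    intro y hy
    rw [(hderiv y hy).deriv]
    rw [interior_Ici] at hy
    have key : (1 + y) ^ (ρ - 1) ≤ 1 + y ^ (ρ - 1) := by
      have := rpow_subadd (ρ - 1) (by linarith) (by linarith) (x := (1:ℝ)) (y := y)
        zero_le_one hy.le
      simpa using this
    nlinarith [mul_le_mul_of_nonneg_left key hρ0.le]
  have h0 : f 0 = 0 := by
    simp [hf, Real.zero_rpow hρ0.ne', Real.one_rpow]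
  have := mono Set.self_mem_Ici (Set.mem_Ici.mpr hx) hx
  rw [h0] at this
  simp only [hf] at this
  linarith

private lemma lemC (hρ1 : 1 ≤ ρ) (hρ2 : ρ ≤ 2) {y : ℝ} (hy0 : 0 ≤ y) (hy1 : y ≤ 1) :
    (1 - y) ^ ρ ≤ 1 - ρ * y + 2 * y ^ ρ := by
  have hρ0 : (0:ℝ) < ρ := lt_of_lt_of_le one_pos hρ1
  set f : ℝ → ℝ := fun y => 1 - ρ * y + 2 * y ^ ρ - (1 - y) ^ ρ with hf
  have hderiv : ∀ z ∈ interior (Set.Icc (0:ℝ) 1),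
      HasDerivAt f (-ρ + 2 * (ρ * z ^ (ρ-1)) + ρ * (1-z) ^ (ρ-1)) z := by
    intro z hz
    rw [interior_Icc] at hz
    have h1 : HasDerivAt (fun x : ℝ => x ^ ρ) (ρ * z ^ (ρ - 1)) z :=
      Real.hasDerivAt_rpow_const (Or.inl (ne_of_gt hz.1))
    have h2 : HasDerivAt (fun x : ℝ => (1 - x) ^ ρ) (-(ρ * (1 - z) ^ (ρ - 1))) z := by
      have := (Real.hasDerivAt_rpow_const (x := 1 - z) (p := ρ)
        (Or.inl (by nlinarith [hz.2]))).comp z ((hasDerivAt_id z).const_sub 1)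
      simpa [Function.comp_def] using this
    have h3 : HasDerivAt (fun x : ℝ => 1 - ρ * x) (-ρ) z := by
      simpa using ((hasDerivAt_id z).const_mul ρ).const_sub 1
    have := (h3.add (h1.const_mul 2)).sub h2
    rw [sub_neg_eq_add] at this
    exact this
  have cont : ContinuousOn f (Set.Icc 0 1) := by
    have c1 : Continuous fun x : ℝ => x ^ ρ := Real.continuous_rpow_const hρ0.le
    exact (((continuous_const.sub (continuous_const.mul continuous_id)).add
      (continuous_const.mul c1)).sub
      (c1.comp (continuous_const.sub continuous_id))).continuousOn
  have mono : MonotoneOn f (Set.Icc 0 1) := by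
    refine monotoneOn_of_deriv_nonneg (convex_Icc 0 1) cont
      (fun z hz => (hderiv z hz).differentiableAt.differentiableWithinAt) ?_
    intro z hz
    rw [(hderiv z hz).deriv]
    rw [interior_Icc] at hz
    have key : (1:ℝ) ≤ z ^ (ρ - 1) + (1 - z) ^ (ρ - 1) := by
      have := rpow_subadd (ρ - 1) (by linarith) (by linarith) (x := z) (y := 1 - z)
        hz.1.le (by linarith [hz.2])
      simpa using this
    nlinarith [Real.rpow_nonneg hz.1.le (ρ - 1)]
  have h0 : f 0 = 0 := by
    simp [hf, Real.zero_rpow hρ0.ne', Real.one_rpow]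
  have := mono (Set.left_mem_Icc.mpr zero_le_one) (Set.mem_Icc.mpr ⟨hy0, hy1⟩) hy0
  rw [h0] at this
  simp only [hf] at this
  linarith

private lemma lemD (hρ1 : 1 ≤ ρ) (hρ2 : ρ ≤ 2) {y : ℝ} (hy : 1 ≤ y) :
    (y - 1) ^ ρ ≤ 1 - ρ * y + 2 * y ^ ρ := by
  have hρ0 : (0:ℝ) < ρ := lt_of_lt_of_le one_pos hρ1
  set f : ℝ → ℝ := fun y => 1 - ρ * y + 2 * y ^ ρ - (y - 1) ^ ρ with hf
  have hderiv : ∀ z ∈ interior (Set.Ici (1:ℝ)),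
      HasDerivAt f (-ρ + 2 * (ρ * z ^ (ρ-1)) - ρ * (z-1) ^ (ρ-1)) z := by
    intro z hz
    rw [interior_Ici] at hz
    have hz1 : (1:ℝ) < z := hz
    have h1 : HasDerivAt (fun x : ℝ => x ^ ρ) (ρ * z ^ (ρ - 1)) z :=
      Real.hasDerivAt_rpow_const (Or.inl (by positivity))
    have h2 : HasDerivAt (fun x : ℝ => (x - 1) ^ ρ) (ρ * (z - 1) ^ (ρ - 1)) z := by
      have := (Real.hasDerivAt_rpow_const (x := z - 1) (p := ρ)
        (Or.inl (by nlinarith))).comp z ((hasDerivAt_id z).sub_const 1)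
      simpa [Function.comp_def] using this
    have h3 : HasDerivAt (fun x : ℝ => 1 - ρ * x) (-ρ) z := by
      simpa using ((hasDerivAt_id z).const_mul ρ).const_sub 1
    exact (h3.add (h1.const_mul 2)).sub h2
  have cont : ContinuousOn f (Set.Ici 1) := by
    have c1 : Continuous fun x : ℝ => x ^ ρ := Real.continuous_rpow_const hρ0.le
    exact (((continuous_const.sub (continuous_const.mul continuous_id)).add
      (continuous_const.mul c1)).sub
      (c1.comp (continuous_id.sub continuous_const))).continuousOn
  have mono : MonotoneOn f (Set.Ici 1) := by
    refine monotoneOn_of_deriv_nonneg (convex_Ici 1) cont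
      (fun z hz => (hderiv z hz).differentiableAt.differentiableWithinAt) ?_
    intro z hz
    rw [(hderiv z hz).deriv]
    rw [interior_Ici] at hz
    have hz1 : (1:ℝ) < z := hz
    have key1 : (1:ℝ) ≤ z ^ (ρ - 1) := by
      have := Real.rpow_le_rpow zero_le_one hz1.le (by linarith : (0:ℝ) ≤ ρ - 1)
      simpa using this
    have key2 : (z - 1) ^ (ρ - 1) ≤ z ^ (ρ - 1) :=
      Real.rpow_le_rpow (by linarith) (by linarith) (by linarith)
    nlinarith
  have h0 : f 1 = 3 - ρ := by
    simp [hf, Real.zero_rpow hρ0.ne', Real.one_rpow]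
    ring
  have := mono Set.self_mem_Ici (Set.mem_Ici.mpr hy) hy
  rw [h0] at this
  simp only [hf] at this
  linarith

private lemma lemE (hρ1 : 1 ≤ ρ) (hρ2 : ρ ≤ 2) (x : ℝ) :
    |1 + x| ^ ρ ≤ 1 + ρ * x + 2 * |x| ^ ρ := by
  have hρ0 : (0:ℝ) < ρ := lt_of_lt_of_le one_pos hρ1
  rcases le_or_gt 0 x with hx | hx
  · rw [abs_of_nonneg (by linarith), abs_of_nonneg hx]
    have := lemB hρ1 hρ2 hx
    have hxρ : 0 ≤ x ^ ρ := Real.rpow_nonneg hx ρ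
    linarith
  · rcases le_or_gt (-1) x with hx1 | hx1
    · have h := lemC hρ1 hρ2 (y := -x) (by linarith) (by linarith)
      rw [show (1:ℝ) - -x = 1 + x by ring] at h
      rw [abs_of_nonneg (by linarith), abs_of_neg hx]
      linarith
    · have h := lemD hρ1 hρ2 (y := -x) (by linarith)
      rw [show -x - 1 = -(1 + x) by ring] at h
      rw [abs_of_neg (by linarith : 1 + x < 0), abs_of_neg hx]
      linarith

private lemma lemF_pos (hρ1 : 1 ≤ ρ) (hρ2 : ρ ≤ 2) {a : ℝ} (ha : 0 < a) (b : ℝ) :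
    |a + b| ^ ρ ≤ |a| ^ ρ + ρ * (Real.sign a * |a| ^ (ρ - 1)) * b + 2 * |b| ^ ρ := by
  have h := lemE hρ1 hρ2 (b / a)
  have e0 : a * |1 + b / a| = |a + b| :=
    calc a * |1 + b / a| = |a| * |1 + b / a| := by rw [abs_of_pos ha]
      _ = |a * (1 + b / a)| := (abs_mul a _).symm
      _ = |a + b| := by congr 1; field_simp
  have e0b : a * |b / a| = |b| :=
    calc a * |b / a| = |a| * |b / a| := by rw [abs_of_pos ha]
      _ = |a * (b / a)| := (abs_mul a _).symm
      _ = |b| := by congr 1; field_simp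
  have e1 : a ^ ρ * |1 + b / a| ^ ρ = |a + b| ^ ρ := by
    rw [← Real.mul_rpow ha.le (abs_nonneg _), e0]
  have hb : a ^ ρ * |b / a| ^ ρ = |b| ^ ρ := by
    rw [← Real.mul_rpow ha.le (abs_nonneg _), e0b]
  have hone : a ^ (ρ - 1) = a ^ ρ / a := by
    rw [Real.rpow_sub ha, Real.rpow_one]
  rw [abs_of_pos ha, Real.sign_of_pos ha, one_mul]
  calc |a + b| ^ ρ = a ^ ρ * |1 + b / a| ^ ρ := e1.symm
    _ ≤ a ^ ρ * (1 + ρ * (b / a) + 2 * |b / a| ^ ρ) :=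
        mul_le_mul_of_nonneg_left h (Real.rpow_nonneg ha.le ρ)
    _ = a ^ ρ + ρ * a ^ (ρ - 1) * b + 2 * |b| ^ ρ := by
        rw [hone, ← hb]
        field_simp

private lemma lemF (hρ1 : 1 ≤ ρ) (hρ2 : ρ ≤ 2) (a b : ℝ) :
    |a + b| ^ ρ ≤ |a| ^ ρ + ρ * (Real.sign a * |a| ^ (ρ - 1)) * b + 2 * |b| ^ ρ := by
  have hρ0 : (0:ℝ) < ρ := lt_of_lt_of_le one_pos hρ1
  rcases lt_trichotomy a 0 with ha | ha | ha
  · have h := lemF_pos hρ1 hρ2 (a := -a) (neg_pos.mpr ha) (-b)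
    rw [show -a + -b = -(a + b) by ring] at h
    simp only [abs_neg] at h
    rw [Real.sign_of_pos (neg_pos.mpr ha)] at h
    rw [Real.sign_of_neg ha]
    refine h.trans_eq ?_
    ring
  · subst ha
    simp only [Real.sign_zero, zero_mul, mul_zero, zero_add, abs_zero,
      Real.zero_rpow hρ0.ne']
    have : 0 ≤ |b| ^ ρ := Real.rpow_nonneg (abs_nonneg b) ρ
    linarith
  · exact lemF_pos hρ1 hρ2 ha b

private lemma lem4 (hρ1 : 1 ≤ ρ) (hρ2 : ρ ≤ 2) (a b : ℝ) :
    |a + b| ^ ρ ≤ 4 * (|a| ^ ρ + |b| ^ ρ) := by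
  have h0 : (0:ℝ) ≤ ρ := by linarith
  have h1 : |a + b| ^ ρ ≤ (|a| + |b|) ^ ρ :=
    Real.rpow_le_rpow (abs_nonneg _) (abs_add_le a b) h0
  have h2 : (|a| + |b|) ^ ρ ≤ (2 * max |a| |b|) ^ ρ := by
    refine Real.rpow_le_rpow (by positivity) ?_ h0
    have := le_max_left |a| |b|
    have := le_max_right |a| |b|
    linarith
  have h3 : (2 * max |a| |b|) ^ ρ = 2 ^ ρ * (max |a| |b|) ^ ρ :=
    Real.mul_rpow (by norm_num) (by positivity)
  have h4 : (2:ℝ) ^ ρ ≤ 4 := by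
    have h24 : (2:ℝ) ^ (2:ℝ) = 4 := by
      have := Real.rpow_natCast (2:ℝ) 2
      norm_num at this
      linarith
    have := Real.rpow_le_rpow_of_exponent_le (x := (2:ℝ)) one_le_two hρ2
    linarith
  have h5 : (max |a| |b|) ^ ρ ≤ |a| ^ ρ + |b| ^ ρ := by
    rcases max_cases |a| |b| with h | h <;> rw [h.1]
    · linarith [Real.rpow_nonneg (abs_nonneg b) ρ]
    · linarith [Real.rpow_nonneg (abs_nonneg a) ρ]
  have h6 : (0:ℝ) ≤ (max |a| |b|) ^ ρ := Real.rpow_nonneg (by positivity) ρ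
  nlinarith [Real.rpow_nonneg (abs_nonneg a) ρ, Real.rpow_nonneg (abs_nonneg b) ρ]

private lemma aux_le {s : ℝ} (hs : 0 ≤ s) (hsρ : s ≤ ρ) {t : ℝ} (ht : 0 ≤ t) :
    t ^ s ≤ 1 + t ^ ρ := by
  rcases le_total t 1 with h | h
  · linarith [Real.rpow_le_one ht h hs, Real.rpow_nonneg ht ρ]
  · linarith [Real.rpow_le_rpow_of_exponent_le h hsρ]

private lemma measurable_sign : Measurable Real.sign := by
  unfold Real.sign
  exact Measurable.ite (measurableSet_lt measurable_id measurable_const) measurable_const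
    (Measurable.ite (measurableSet_lt measurable_const measurable_id)
      measurable_const measurable_const)

variable {Ω : Type*} [MeasurableSpace Ω]

private lemma step (μ : Measure Ω) [IsProbabilityMeasure μ] {f g : Ω → ℝ}
    (hρ1 : 1 ≤ ρ) (hρ2 : ρ ≤ 2)
    (hf : Measurable f) (hg : Measurable g)
    (hif : Integrable (fun ω => |f ω| ^ ρ) μ) (hig : Integrable (fun ω => |g ω| ^ ρ) μ)
    (hind : IndepFun f g μ) (hg0 : ∫ ω, g ω ∂μ = 0) :
    ∫ ω, |f ω + g ω| ^ ρ ∂μ ≤ (∫ ω, |f ω| ^ ρ ∂μ) + 2 * ∫ ω, |g ω| ^ ρ ∂μ := by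
  have hρ0 : (0:ℝ) < ρ := lt_of_lt_of_le one_pos hρ1
  have hcont : Continuous fun t : ℝ => t ^ (ρ - 1) :=
    Real.continuous_rpow_const (by linarith)
  set φ : ℝ → ℝ := fun t => Real.sign t * |t| ^ (ρ - 1) with hφ
  have hmφ : Measurable φ :=
    measurable_sign.mul (hcont.measurable.comp measurable_abs)
  have hif1 : Integrable (fun ω => 1 + |f ω| ^ ρ) μ := (integrable_const (1:ℝ)).add hif
  have hig1 : Integrable (fun ω => 1 + |g ω| ^ ρ) μ := (integrable_const (1:ℝ)).add hig
  have hφf_int : Integrable (fun ω => φ (f ω)) μ := by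
    refine Integrable.mono hif1 ((hmφ.comp hf).aestronglyMeasurable) ?_
    filter_upwards with ω
    simp only [Real.norm_eq_abs]
    rw [abs_of_nonneg (by positivity : (0:ℝ) ≤ 1 + |f ω| ^ ρ)]
    have h1 : |φ (f ω)| ≤ |f ω| ^ (ρ - 1) := by
      rw [hφ]
      simp only
      rw [abs_mul, abs_of_nonneg (Real.rpow_nonneg (abs_nonneg _) _)]
      rcases Real.sign_apply_eq (f ω) with h | h | h <;> rw [h] <;>
        simp [Real.rpow_nonneg (abs_nonneg (f ω)) (ρ - 1)]
    exact h1.trans (aux_le (by linarith) (by linarith) (abs_nonneg _))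
  have hg_int : Integrable g μ := by
    refine Integrable.mono hig1 hg.aestronglyMeasurable ?_
    filter_upwards with ω
    simp only [Real.norm_eq_abs]
    rw [abs_of_nonneg (by positivity : (0:ℝ) ≤ 1 + |g ω| ^ ρ)]
    have := aux_le (s := 1) zero_le_one hρ1 (abs_nonneg (g ω))
    simpa using this
  have hindφ : IndepFun (fun ω => φ (f ω)) g μ := hind.comp hmφ measurable_id
  have hmul_int : Integrable (fun ω => φ (f ω) * g ω) μ :=
    hindφ.integrable_mul hφf_int hg_int
  have hmean0 : ∫ ω, φ (f ω) * g ω ∂μ = 0 := by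
    rw [hindφ.integral_fun_mul_eq_mul_integral hφf_int.aestronglyMeasurable hg_int.aestronglyMeasurable,
      hg0, mul_zero]
  have hC : Integrable (fun ω => ρ * (φ (f ω) * g ω)) μ := hmul_int.const_mul ρ
  have hD : Integrable (fun ω => 2 * |g ω| ^ ρ) μ := hig.const_mul 2
  have hA : Integrable (fun ω => |f ω| ^ ρ + ρ * (φ (f ω) * g ω)) μ := hif.add hC
  have hsum_int : Integrable
      (fun ω => |f ω| ^ ρ + ρ * (φ (f ω) * g ω) + 2 * |g ω| ^ ρ) μ := hA.add hD
  have hle : ∫ ω, |f ω + g ω| ^ ρ ∂μ ≤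
      ∫ ω, (|f ω| ^ ρ + ρ * (φ (f ω) * g ω) + 2 * |g ω| ^ ρ) ∂μ := by
    refine integral_mono_of_nonneg ?_ hsum_int ?_
    · filter_upwards with ω using Real.rpow_nonneg (abs_nonneg _) ρ
    · filter_upwards with ω
      exact (lemF hρ1 hρ2 (f ω) (g ω)).trans_eq (by rw [hφ]; ring)
  rw [integral_add hA hD, integral_add hif hC, integral_const_mul, integral_const_mul,
    hmean0, mul_zero, add_zero] at hle
  linarith

private lemma sum_bound (μ : Measure Ω) [IsProbabilityMeasure μ]
    {n : ℕ} (X : Fin n → Ω → ℝ) (hmeas : ∀ i, Measurable (X i))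
    (hindep : iIndepFun X μ)
    (hρ1 : 1 ≤ ρ) (hρ2 : ρ ≤ 2) (M : ℝ) (hM0 : 0 ≤ M)
    (hint : ∀ i, Integrable (fun ω => |X i ω| ^ ρ) μ)
    (hM : ∀ i, ∫ ω, |X i ω| ^ ρ ∂μ ≤ M)
    (hmean : ∀ i, ∫ ω, X i ω ∂μ = 0)
    (s : Finset (Fin n)) :
    Integrable (fun ω => |∑ i ∈ s, X i ω| ^ ρ) μ ∧
      ∫ ω, |∑ i ∈ s, X i ω| ^ ρ ∂μ ≤ 2 * s.card * M := by
  classical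
  have hρ0 : (0:ℝ) < ρ := lt_of_lt_of_le one_pos hρ1
  induction s using Finset.cons_induction with
  | empty =>
      constructor
      · simpa [Real.zero_rpow hρ0.ne'] using (integrable_const (0:ℝ))
      · simp [Real.zero_rpow hρ0.ne']
  | cons a s ha ih =>
      have hmS : Measurable (fun ω => ∑ i ∈ s, X i ω) :=
        Finset.measurable_sum s (fun i _ => hmeas i)
      have hrw : (fun ω => |∑ i ∈ Finset.cons a s ha, X i ω| ^ ρ) =
          fun ω => |(∑ i ∈ s, X i ω) + X a ω| ^ ρ := by
        funext ω
        rw [Finset.sum_cons, add_comm]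
      have hindS : IndepFun (fun ω => ∑ i ∈ s, X i ω) (X a) μ := by
        have := hindep.indepFun_finsetSum_of_notMem hmeas ha
        have he : (∑ j ∈ s, X j) = fun ω => ∑ i ∈ s, X i ω := by
          funext ω
          simp [Finset.sum_apply]
        rwa [he] at this
      have hintS : Integrable (fun ω => |(∑ i ∈ s, X i ω) + X a ω| ^ ρ) μ := by
        have hsum2 : Integrable (fun ω => |∑ i ∈ s, X i ω| ^ ρ + |X a ω| ^ ρ) μ :=
          ih.1.add (hint a)
        have hbnd : Integrable (fun ω => 4 * (|∑ i ∈ s, X i ω| ^ ρ + |X a ω| ^ ρ)) μ :=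
          hsum2.const_mul 4
        refine Integrable.mono hbnd
          ((Real.continuous_rpow_const hρ0.le).measurable.comp
            ((hmS.add (hmeas a)).abs) |>.aestronglyMeasurable) ?_
        filter_upwards with ω
        simp only [Real.norm_eq_abs]
        rw [abs_of_nonneg (Real.rpow_nonneg (abs_nonneg _) ρ),
          abs_of_nonneg (by positivity : (0:ℝ) ≤ 4 * (|∑ i ∈ s, X i ω| ^ ρ + |X a ω| ^ ρ))]
        exact lem4 hρ1 hρ2 _ _
      have hstep := step μ hρ1 hρ2 hmS (hmeas a) ih.1 (hint a) hindS (hmean a)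
      constructor
      · rw [hrw]; exact hintS
      · rw [hrw]
        have hcard : ((Finset.cons a s ha).card : ℝ) = s.card + 1 := by
          rw [Finset.card_cons]; push_cast; ring
        rw [hcard]
        have := hM a
        have := ih.2
        nlinarith

end Statement18Aux

/-- Tail bound for the sample average: if `X₁, …, X_n` are i.i.d. real
random variables with `E[X] = 0` and `E[|X|^ρ] < ∞` for some `ρ ∈ [1,2]`, then
`P( |(1/n)Σᵢ Xᵢ| ≥ n^{(2−ρ)/ρ} ) ≤ 2 E[|X|^ρ] / n`. -/
theorem tail_bound_average
    (Ω : Type*) [MeasurableSpace Ω] (μ : Measure Ω) (hμ : IsProbabilityMeasure μ)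
    (n : ℕ) (hn : 1 ≤ n) (X : Fin n → Ω → ℝ)
    (hmeas : ∀ i, Measurable (X i))
    (hindep : iIndepFun X μ)
    (ν : Measure ℝ) (hν : IsProbabilityMeasure ν)
    (hlaw : ∀ i, μ.map (X i) = ν)
    (ρ : ℝ) (hρ1 : 1 ≤ ρ) (hρ2 : ρ ≤ 2)
    (hmean : (∫ x, x ∂ν) = 0)
    (hmom : Integrable (fun x : ℝ => |x| ^ ρ) ν) :
    μ {ω | (n : ℝ) ^ ((2 - ρ)/ρ) ≤ |(n : ℝ)⁻¹ * ∑ i, X i ω|} ≤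
      ENNReal.ofReal (2 * (∫ x, |x| ^ ρ ∂ν) / n) := by
  have hρ0 : (0:ℝ) < ρ := lt_of_lt_of_le one_pos hρ1
  have hn0 : (0:ℝ) < n := by exact_mod_cast hn
  have hcont : Continuous fun x : ℝ => |x| ^ ρ :=
    (Real.continuous_rpow_const hρ0.le).comp continuous_abs
  set M : ℝ := ∫ x, |x| ^ ρ ∂ν with hM
  have hM0 : 0 ≤ M := integral_nonneg fun x => Real.rpow_nonneg (abs_nonneg x) ρ
  have hasm : ∀ i, AEStronglyMeasurable (fun x : ℝ => |x| ^ ρ) (μ.map (X i)) :=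
    fun i => hcont.aestronglyMeasurable
  have hint : ∀ i, Integrable (fun ω => |X i ω| ^ ρ) μ := by
    intro i
    have h2 := (integrable_map_measure (hasm i) (hmeas i).aemeasurable).mp
      (by rw [hlaw i]; exact hmom)
    simpa [Function.comp_def] using h2
  have hval : ∀ i, ∫ ω, |X i ω| ^ ρ ∂μ = M := by
    intro i
    have h2 := integral_map (hmeas i).aemeasurable (hasm i)
    rw [hlaw i] at h2
    exact h2.symm
  have hmean_i : ∀ i, ∫ ω, X i ω ∂μ = 0 := by
    intro i
    have h1 : AEStronglyMeasurable (fun x : ℝ => x) (μ.map (X i)) :=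
      aestronglyMeasurable_id
    have h2 := integral_map (hmeas i).aemeasurable h1
    rw [hlaw i] at h2
    rw [← h2]
    exact hmean
  obtain ⟨hSint, hSle⟩ := sum_bound μ X hmeas hindep hρ1 hρ2 M hM0 hint
    (fun i => le_of_eq (hval i)) hmean_i Finset.univ
  have hcard : (((Finset.univ : Finset (Fin n))).card : ℝ) = n := by simp
  rw [hcard] at hSle
  have hsub : {ω | (n : ℝ) ^ ((2 - ρ)/ρ) ≤ |(n : ℝ)⁻¹ * ∑ i, X i ω|} ⊆
      {ω | (n:ℝ) ^ (2:ℝ) ≤ |∑ i, X i ω| ^ ρ} := by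
    intro ω hω
    simp only [Set.mem_setOf_eq] at hω ⊢
    rw [abs_mul, abs_of_nonneg (inv_nonneg.mpr hn0.le)] at hω
    have h1 : (n:ℝ) ^ (2/ρ) ≤ |∑ i, X i ω| := by
      have h2 : (n:ℝ) * (n:ℝ) ^ ((2-ρ)/ρ) ≤ (n:ℝ) * ((n:ℝ)⁻¹ * |∑ i, X i ω|) :=
        mul_le_mul_of_nonneg_left hω hn0.le
      rw [← mul_assoc, mul_inv_cancel₀ hn0.ne', one_mul] at h2
      calc (n:ℝ) ^ (2/ρ) = (n:ℝ) ^ (1 + (2-ρ)/ρ) := by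
            congr 1
            field_simp
            ring
        _ = (n:ℝ) * (n:ℝ) ^ ((2-ρ)/ρ) := by rw [Real.rpow_add hn0, Real.rpow_one]
        _ ≤ |∑ i, X i ω| := h2
    calc (n:ℝ) ^ (2:ℝ) = ((n:ℝ) ^ (2/ρ)) ^ ρ := by
          rw [← Real.rpow_mul hn0.le]
          congr 1
          field_simp
      _ ≤ |∑ i, X i ω| ^ ρ := Real.rpow_le_rpow (Real.rpow_nonneg hn0.le _) h1 hρ0.le
  have hmar := mul_meas_ge_le_integral_of_nonneg
    (f := fun ω => |∑ i, X i ω| ^ ρ)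
    (Filter.Eventually.of_forall fun ω => Real.rpow_nonneg (abs_nonneg _) ρ)
    hSint ((n:ℝ) ^ (2:ℝ))
  have hne : μ {ω | (n:ℝ) ^ (2:ℝ) ≤ |∑ i, X i ω| ^ ρ} ≠ ⊤ := measure_ne_top μ _
  have hto : (μ {ω | (n:ℝ) ^ (2:ℝ) ≤ |∑ i, X i ω| ^ ρ}).toReal ≤ 2 * M / n := by
    have hsq : (n:ℝ) ^ (2:ℝ) = (n:ℝ) * n := by
      rw [show (2:ℝ) = ((2:ℕ):ℝ) by norm_num, Real.rpow_natCast]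
      ring
    rw [le_div_iff₀ hn0]
    unfold Measure.real at hmar
    set t := (μ {ω | (n:ℝ) ^ (2:ℝ) ≤ |∑ i, X i ω| ^ ρ}).toReal with ht
    rw [hsq] at hmar
    have h3 : (n:ℝ) * (t * n) ≤ (n:ℝ) * (2 * M) := by nlinarith [hmar, hSle]
    exact le_of_mul_le_mul_left h3 hn0
  calc μ {ω | (n : ℝ) ^ ((2 - ρ)/ρ) ≤ |(n : ℝ)⁻¹ * ∑ i, X i ω|}
      ≤ μ {ω | (n:ℝ) ^ (2:ℝ) ≤ |∑ i, X i ω| ^ ρ} := measure_mono hsub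
    _ = ENNReal.ofReal (μ {ω | (n:ℝ) ^ (2:ℝ) ≤ |∑ i, X i ω| ^ ρ}).toReal :=
        (ENNReal.ofReal_toReal hne).symm
    _ ≤ ENNReal.ofReal (2 * M / n) := ENNReal.ofReal_le_ofReal hto

end
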